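/- arXiv:2012.08438 — 3 statements merged into one kernel-verified Lean document; each statement's English description precedes it below -/
import Mathlib

section
/- Define $L(\lambda, a, b) = \int_0^{\infty} e^{-\lambda(2x+1)} x^{a-1} (1+x)^{-b}\, dx$. Then for $\lambda > 0$ and $a, b > 0$, the transformation property $\frac{(2\lambda)^a}{\Gamma(a)} L(\lambda, a, b) = \frac{(2\lambda)^b}{\Gamma(b)} L(\lambda, b, a)$ holds. -/
open MeasureTheory Real

noncomputable def Lfun (lam a b : ℝ) : ℝ :=
  ∫ x in Set.Ioi (0 : ℝ), Real.exp (-lam * (2 * x + 1)) * x ^ (a - 1) * (1 + x) ^ (-b)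

lemma gamma_int {s r : ℝ} (hs : 0 < s) (hr : 0 < r) :
    ∫ t in Set.Ioi (0 : ℝ), Real.exp (-(r * t)) * t ^ (s - 1) = Real.Gamma s / r ^ s := by
  have h := Real.integral_rpow_mul_exp_neg_mul_Ioi hs hr
  have h2 : (∫ t in Set.Ioi (0 : ℝ), Real.exp (-(r * t)) * t ^ (s - 1))
      = ∫ t in Set.Ioi (0 : ℝ), t ^ (s - 1) * Real.exp (-(r * t)) := by
    simp_rw [mul_comm]
  rw [h2, h, one_div, Real.inv_rpow hr.le, inv_mul_eq_div]

lemma gamma_intble {s r : ℝ} (hs : 0 < s) (hr : 0 < r) :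
    IntegrableOn (fun t : ℝ => Real.exp (-(r * t)) * t ^ (s - 1)) (Set.Ioi 0) := by
  have h := integrableOn_rpow_mul_exp_neg_mul_rpow (s := s - 1) (p := 1) (b := r)
    (by linarith) zero_lt_one hr
  simp only [Real.rpow_one] at h
  exact h.congr_fun (fun x _ => by beta_reduce; rw [mul_comm, neg_mul]) measurableSet_Ioi

theorem stmt3 (lam a b : ℝ) (hlam : 0 < lam) (ha : 0 < a) (hb : 0 < b) :
    (2 * lam) ^ a / Real.Gamma a * Lfun lam a b =
      (2 * lam) ^ b / Real.Gamma b * Lfun lam b a := by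
  set z : ℝ := 2 * lam with hzdef
  have hz : 0 < z := by positivity
  set I : ℝ → ℝ → ℝ := fun u v =>
    ∫ x in Set.Ioi (0 : ℝ), Real.exp (-(z * x)) * x ^ (u - 1) * (1 + x) ^ (-v) with hI
  set J : ℝ → ℝ → ℝ := fun u v =>
    ∫ x in Set.Ioi (0 : ℝ), ∫ t in Set.Ioi (0 : ℝ),
      Real.exp (-(z * (x + t + x * t))) * x ^ (u - 1) * t ^ (v - 1) with hJdef
  -- inner evaluation
  have inner : ∀ u v : ℝ, 0 < v → ∀ x : ℝ, x ∈ Set.Ioi (0 : ℝ) →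
      (∫ t in Set.Ioi (0 : ℝ),
        Real.exp (-(z * (x + t + x * t))) * x ^ (u - 1) * t ^ (v - 1))
      = Real.Gamma v / z ^ v *
          (Real.exp (-(z * x)) * x ^ (u - 1) * (1 + x) ^ (-v)) := by
    intro u v hv x hx
    rw [Set.mem_Ioi] at hx
    have hx1 : (0 : ℝ) < 1 + x := by linarith
    have hc : (0 : ℝ) < z * (1 + x) := by positivity
    have h1 : (∫ t in Set.Ioi (0 : ℝ),
        Real.exp (-(z * (x + t + x * t))) * x ^ (u - 1) * t ^ (v - 1))
        = ∫ t in Set.Ioi (0 : ℝ),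
          (Real.exp (-(z * x)) * x ^ (u - 1)) *
            (Real.exp (-((z * (1 + x)) * t)) * t ^ (v - 1)) := by
      refine setIntegral_congr_fun measurableSet_Ioi (fun t _ => ?_)
      rw [show -(z * (x + t + x * t)) = -(z * x) + -((z * (1 + x)) * t) by ring,
        Real.exp_add]
      ring
    rw [h1, integral_const_mul, gamma_int hv hc,
      Real.mul_rpow hz.le hx1.le, Real.rpow_neg hx1.le]
    have h2 : (1 + x) ^ v ≠ 0 := by positivity
    have h3 : z ^ v ≠ 0 := by positivity
    field_simp
  -- J in terms of I
  have hJI : ∀ u v : ℝ, 0 < v → J u v = Real.Gamma v / z ^ v * I u v := by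
    intro u v hv
    rw [hJdef, hI]
    simp only
    rw [setIntegral_congr_fun measurableSet_Ioi (inner u v hv), integral_const_mul]
  -- symmetry of J via Fubini
  have hswap : J a b = J b a := by
    have hG : Integrable
        (fun p : ℝ × ℝ => (Real.exp (-(z * p.1)) * p.1 ^ (a - 1)) *
          (Real.exp (-(z * p.2)) * p.2 ^ (b - 1)))
        ((volume.restrict (Set.Ioi 0)).prod (volume.restrict (Set.Ioi 0))) :=
      (gamma_intble ha hz).mul_prod (gamma_intble hb hz)
    have hmeas : AEStronglyMeasurable
        (fun p : ℝ × ℝ => Real.exp (-(z * (p.1 + p.2 + p.1 * p.2)))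
          * p.1 ^ (a - 1) * p.2 ^ (b - 1))
        ((volume.restrict (Set.Ioi 0)).prod (volume.restrict (Set.Ioi 0))) := by
      apply Measurable.aestronglyMeasurable
      fun_prop
    have hbound : ∀ᵐ p : ℝ × ℝ
        ∂((volume.restrict (Set.Ioi 0)).prod (volume.restrict (Set.Ioi 0))),
        ‖Real.exp (-(z * (p.1 + p.2 + p.1 * p.2))) * p.1 ^ (a - 1) * p.2 ^ (b - 1)‖
          ≤ (Real.exp (-(z * p.1)) * p.1 ^ (a - 1)) *
            (Real.exp (-(z * p.2)) * p.2 ^ (b - 1)) := by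
      rw [Measure.prod_restrict]
      refine (ae_restrict_iff' (measurableSet_Ioi.prod measurableSet_Ioi)).2
        (Filter.Eventually.of_forall ?_)
      rintro ⟨x, t⟩ ⟨hx, ht⟩
      rw [Set.mem_Ioi] at hx ht
      simp only
      have hX : (0 : ℝ) ≤ x ^ (a - 1) := Real.rpow_nonneg hx.le _
      have hT : (0 : ℝ) ≤ t ^ (b - 1) := Real.rpow_nonneg ht.le _
      rw [Real.norm_eq_abs, abs_of_nonneg (by positivity)]
      have h1 : Real.exp (-(z * (x + t + x * t)))
          ≤ Real.exp (-(z * x)) * Real.exp (-(z * t)) := by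
        rw [← Real.exp_add]
        apply Real.exp_le_exp.mpr
        nlinarith [mul_pos (mul_pos hz hx) ht]
      calc Real.exp (-(z * (x + t + x * t))) * x ^ (a - 1) * t ^ (b - 1)
          ≤ (Real.exp (-(z * x)) * Real.exp (-(z * t))) * x ^ (a - 1) * t ^ (b - 1) := by
            gcongr
        _ = (Real.exp (-(z * x)) * x ^ (a - 1)) * (Real.exp (-(z * t)) * t ^ (b - 1)) := by
            ring
    have hF : Integrable
        (fun p : ℝ × ℝ => Real.exp (-(z * (p.1 + p.2 + p.1 * p.2)))
          * p.1 ^ (a - 1) * p.2 ^ (b - 1))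
        ((volume.restrict (Set.Ioi 0)).prod (volume.restrict (Set.Ioi 0))) :=
      hG.mono' hmeas hbound
    have hs := MeasureTheory.integral_integral_swap
      (f := fun x t : ℝ =>
        Real.exp (-(z * (x + t + x * t))) * x ^ (a - 1) * t ^ (b - 1))
      (μ := volume.restrict (Set.Ioi 0)) (ν := volume.restrict (Set.Ioi 0)) hF
    rw [hJdef]
    simp only
    rw [hs]
    refine setIntegral_congr_fun measurableSet_Ioi (fun x _ => ?_)
    refine setIntegral_congr_fun measurableSet_Ioi (fun t _ => ?_)
    beta_reduce
    rw [show t + x + t * x = x + t + x * t by ring]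
    ring
  -- Lfun in terms of I
  have hL : ∀ u v : ℝ, Lfun lam u v = Real.exp (-lam) * I u v := by
    intro u v
    rw [Lfun, hI]
    simp only
    rw [← integral_const_mul]
    refine setIntegral_congr_fun measurableSet_Ioi (fun x _ => ?_)
    rw [show -lam * (2 * x + 1) = -lam + -(z * x) by rw [hzdef]; ring, Real.exp_add]
    ring
  -- final algebra
  have hga : (0 : ℝ) < Real.Gamma a := Real.Gamma_pos_of_pos ha
  have hgb : (0 : ℝ) < Real.Gamma b := Real.Gamma_pos_of_pos hb
  have hza : (0 : ℝ) < z ^ a := Real.rpow_pos_of_pos hz a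
  have hzb : (0 : ℝ) < z ^ b := Real.rpow_pos_of_pos hz b
  have key : Real.Gamma b / z ^ b * I a b = Real.Gamma a / z ^ a * I b a :=
    (hJI a b hb).symm.trans (hswap.trans (hJI b a ha))
  rw [hL a b, hL b a]
  field_simp at key ⊢
  nlinarith [key, Real.exp_pos (-lam)]
end

section
/- For all real $x > 0$ and real $\alpha, \beta$ with $0 < \alpha \le \beta$ satisfying $x + \alpha > 0$ and $x+\beta>0$, one has $x^{\beta - \alpha} \frac{\Gamma(x+\alpha)}{\Gamma(x+\beta)} \leq \frac{x+\beta}{x+\alpha}$. -/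
open Real

lemma base (x α β : ℝ) (hx : 0 < x) (hα : 0 < α) (hαβ : α ≤ β) (hβ1 : β ≤ α + 1) :
    x ^ (β - α) * (Real.Gamma (x + α) / Real.Gamma (x + β)) ≤ (x + β) / (x + α) := by
  set t := β - α with ht
  have ht0 : 0 ≤ t := by linarith
  have ht1 : t ≤ 1 := by linarith
  have hxα : 0 < x + α := by linarith
  have hxβ : 0 < x + β := by linarith
  have hGα : 0 < Real.Gamma (x + α) := Real.Gamma_pos_of_pos hxα
  have hGβ : 0 < Real.Gamma (x + β) := Real.Gamma_pos_of_pos hxβ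
  -- log-convexity: x+α+1 = t*(x+β) + (1-t)*(x+β+1)
  have hconv := Real.convexOn_log_Gamma.2 (Set.mem_Ioi.2 hxβ)
    (Set.mem_Ioi.2 (by linarith : (0:ℝ) < x + β + 1)) ht0 (by linarith : 0 ≤ 1 - t)
    (by ring)
  have hcomb : t • (x + β) + (1 - t) • (x + β + 1) = x + α + 1 := by
    simp only [smul_eq_mul]; ring
  rw [hcomb] at hconv
  simp only [Function.comp, smul_eq_mul] at hconv
  -- exponentiate
  have hGβ1 : Real.Gamma (x + β + 1) = (x + β) * Real.Gamma (x + β) :=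
    Real.Gamma_add_one (ne_of_gt hxβ)
  have hGα1 : Real.Gamma (x + α + 1) = (x + α) * Real.Gamma (x + α) :=
    Real.Gamma_add_one (ne_of_gt hxα)
  have key : (x + α) * Real.Gamma (x + α) ≤ Real.Gamma (x + β) * (x + β) ^ (1 - t) := by
    rw [← hGα1]
    have h1 : Real.Gamma (x + α + 1) ≤
        Real.Gamma (x + β) ^ t * Real.Gamma (x + β + 1) ^ (1 - t) := by
      have := Real.exp_le_exp.2 hconv
      rwa [Real.exp_log (Real.Gamma_pos_of_pos (by linarith)),
        Real.exp_add, mul_comm t, mul_comm (1 - t), ← Real.rpow_def_of_pos hGβ,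
        ← Real.rpow_def_of_pos (Real.Gamma_pos_of_pos (by linarith))] at this
    calc Real.Gamma (x + α + 1) ≤ Real.Gamma (x + β) ^ t * Real.Gamma (x + β + 1) ^ (1 - t) := h1
      _ = Real.Gamma (x + β) * (x + β) ^ (1 - t) := by
          rw [hGβ1, Real.mul_rpow hxβ.le hGβ.le, ← mul_assoc,
            mul_comm (Real.Gamma (x + β) ^ t), mul_assoc,
            ← Real.rpow_add hGβ]
          ring_nf
          rw [Real.rpow_one]
  have step : Real.Gamma (x + α) / Real.Gamma (x + β) ≤ (x + β) ^ (1 - t) / (x + α) := by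
    rw [div_le_div_iff₀ hGβ hxα]
    nlinarith [key, hGβ.le, Real.rpow_nonneg hxβ.le (1 - t)]
  calc x ^ t * (Real.Gamma (x + α) / Real.Gamma (x + β))
      ≤ (x + β) ^ t * ((x + β) ^ (1 - t) / (x + α)) := by
        apply mul_le_mul (Real.rpow_le_rpow hx.le (by linarith) ht0) step
          (div_nonneg hGα.le hGβ.le) (by positivity)
    _ = (x + β) / (x + α) := by
        rw [mul_div_assoc', ← Real.rpow_add hxβ]
        norm_num

lemma key (x α : ℝ) (hx : 0 < x) (hα : 0 < α) :
    ∀ n : ℕ, ∀ β : ℝ, α ≤ β → β ≤ α + n + 1 →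
      x ^ (β - α) * (Real.Gamma (x + α) / Real.Gamma (x + β)) ≤ (x + β) / (x + α) := by
  intro n
  induction n with
  | zero => intro β h1 h2; exact base x α β hx hα h1 (by push_cast at h2; linarith)
  | succ n ih =>
    intro β hαβ hβn
    by_cases hc : β ≤ α + n + 1
    · exact ih β hαβ hc
    push_neg at hc
    have hβ1 : α ≤ β - 1 := by linarith [Nat.cast_nonneg (α := ℝ) n]
    have hβ1' : β - 1 ≤ α + n + 1 := by push_cast at hβn ⊢; linarith
    have h := ih (β - 1) hβ1 hβ1'
    have hxβ1 : 0 < x + (β - 1) := by linarith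
    have hxα : 0 < x + α := by linarith
    have hGβ1 : 0 < Real.Gamma (x + (β - 1)) := Real.Gamma_pos_of_pos hxβ1
    have hGα : 0 < Real.Gamma (x + α) := Real.Gamma_pos_of_pos hxα
    have hG : Real.Gamma (x + β) = (x + (β - 1)) * Real.Gamma (x + (β - 1)) := by
      rw [show x + β = (x + (β - 1)) + 1 by ring, Real.Gamma_add_one (ne_of_gt hxβ1)]
    have hsplit : x ^ (β - α) = x ^ (β - 1 - α) * x := by
      rw [show β - α = (β - 1 - α) + 1 by ring, Real.rpow_add hx, Real.rpow_one]
    calc x ^ (β - α) * (Real.Gamma (x + α) / Real.Gamma (x + β))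
        = (x ^ (β - 1 - α) * (Real.Gamma (x + α) / Real.Gamma (x + (β - 1)))) *
            (x / (x + (β - 1))) := by
          rw [hsplit, hG]; field_simp
      _ ≤ ((x + (β - 1)) / (x + α)) * 1 := by
          apply mul_le_mul h (by rw [div_le_one hxβ1]; linarith)
            (by positivity) (by positivity)
      _ ≤ (x + β) / (x + α) := by
          rw [mul_one]
          gcongr
          linarith

theorem stmt4 (x α β : ℝ) (hx : 0 < x) (hα : 0 < α) (hαβ : α ≤ β)
    (h1 : 0 < x + α) (h2 : 0 < x + β) :
    x ^ (β - α) * (Real.Gamma (x + α) / Real.Gamma (x + β)) ≤ (x + β) / (x + α) := by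
  obtain ⟨n, hn⟩ := exists_nat_ge (β - α)
  exact key x α hx hα n β hαβ (by linarith)
end

section
/- For real parameters $\delta, \beta > 0$ and $\eta$ with $\eta - \delta - \beta > 0$, the Gauss hypergeometric value at 1 gives $\sum_{k=0}^{\infty} \frac{\Gamma(\delta + k)\Gamma(\beta + k)}{\Gamma(\eta + k)\Gamma(k+1)} = \frac{\Gamma(\delta)\Gamma(\beta)\Gamma(\eta - \delta - \beta)}{\Gamma(\eta - \delta)\Gamma(\eta - \beta)}$. -/
open Real MeasureTheory Set

lemma integrableOn_gamma_scaled {a r : ℝ} (ha : 0 < a) (hr : 0 < r) :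
    IntegrableOn (fun t : ℝ => t ^ (a - 1) * Real.exp (-(r * t))) (Ioi (0:ℝ)) := by
  have h0 : IntegrableOn (fun x : ℝ => Real.exp (-x) * x ^ (a - 1)) (Ioi (0:ℝ)) :=
    Real.GammaIntegral_convergent ha
  have h1 : IntegrableOn (fun t : ℝ => Real.exp (-(r * t)) * (r * t) ^ (a - 1))
      (Ioi (0:ℝ)) := by
    have := (integrableOn_Ioi_comp_mul_left_iff
      (fun x : ℝ => Real.exp (-x) * x ^ (a - 1)) 0 hr).2
    rw [mul_zero] at this
    simpa using this h0
  have h2 : IntegrableOn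
      (fun t : ℝ => (r ^ (a - 1))⁻¹ * (Real.exp (-(r * t)) * (r * t) ^ (a - 1)))
      (Ioi (0:ℝ)) := h1.const_mul _
  refine h2.congr_fun (fun t ht => ?_) measurableSet_Ioi
  have ht : (0:ℝ) < t := ht
  beta_reduce
  rw [Real.mul_rpow hr.le ht.le]
  have : r ^ (a - 1) ≠ 0 := (Real.rpow_pos_of_pos hr _).ne'
  field_simp

lemma lintegral_gamma_scaled {a r : ℝ} (ha : 0 < a) (hr : 0 < r) :
    ∫⁻ t in Ioi (0:ℝ), ENNReal.ofReal (t ^ (a - 1) * Real.exp (-(r * t))) =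
      ENNReal.ofReal ((1 / r) ^ a * Real.Gamma a) := by
  rw [← Real.integral_rpow_mul_exp_neg_mul_Ioi ha hr,
    ofReal_integral_eq_lintegral_ofReal (integrableOn_gamma_scaled ha hr)]
  refine (ae_restrict_iff' measurableSet_Ioi).2 (ae_of_all _ fun x hx => ?_)
  have hx : (0:ℝ) < x := hx
  positivity

lemma beta_eqOn {a b : ℝ} :
    ∀ x ∈ Icc (0:ℝ) 1,
      (x:ℂ) ^ ((a:ℂ) - 1) * ((1:ℂ) - x) ^ ((b:ℂ) - 1) =
        ((x ^ (a - 1) * (1 - x) ^ (b - 1) : ℝ) : ℂ) := by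
  intro x hx
  have h1 : (0:ℝ) ≤ x := hx.1
  have h2 : (0:ℝ) ≤ 1 - x := by linarith [hx.2]
  rw [Complex.ofReal_mul, Complex.ofReal_cpow h1, Complex.ofReal_cpow h2]
  push_cast
  ring

lemma integral_beta_real {a b : ℝ} (ha : 0 < a) (hb : 0 < b) :
    ∫ x in (0:ℝ)..1, x ^ (a - 1) * (1 - x) ^ (b - 1) =
      Real.Gamma a * Real.Gamma b / Real.Gamma (a + b) := by
  have key := Complex.Gamma_mul_Gamma_eq_betaIntegral
    (s := (a:ℂ)) (t := (b:ℂ)) (by simpa using ha) (by simpa using hb)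
  have hβ : Complex.betaIntegral (a:ℂ) (b:ℂ) =
      ((∫ x in (0:ℝ)..1, x ^ (a - 1) * (1 - x) ^ (b - 1) : ℝ) : ℂ) := by
    rw [Complex.betaIntegral, ← intervalIntegral.integral_ofReal]
    refine intervalIntegral.integral_congr fun x hx => ?_
    rw [uIcc_of_le zero_le_one] at hx
    exact beta_eqOn x hx
  rw [hβ, ← Complex.ofReal_add, Complex.Gamma_ofReal, Complex.Gamma_ofReal,
    Complex.Gamma_ofReal, ← Complex.ofReal_mul, ← Complex.ofReal_mul] at key
  have hr := Complex.ofReal_inj.1 key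
  have hG : Real.Gamma (a + b) ≠ 0 := (Real.Gamma_pos_of_pos (by linarith)).ne'
  field_simp [hr]
  rw [hr]; ring

lemma integrableOn_beta {a b : ℝ} (ha : 0 < a) (hb : 0 < b) :
    IntegrableOn (fun x : ℝ => x ^ (a - 1) * (1 - x) ^ (b - 1)) (Ioc (0:ℝ) 1) := by
  have h := Complex.betaIntegral_convergent
    (u := (a:ℂ)) (v := (b:ℂ)) (by simpa using ha) (by simpa using hb)
  have h2 : IntegrableOn
      (fun x : ℝ => (x:ℂ) ^ ((a:ℂ) - 1) * ((1:ℂ) - x) ^ ((b:ℂ) - 1)) (Ioc (0:ℝ) 1) := h.1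
  have h3 : IntegrableOn
      (fun x : ℝ => ((x:ℂ) ^ ((a:ℂ) - 1) * ((1:ℂ) - x) ^ ((b:ℂ) - 1)).re)
      (Ioc (0:ℝ) 1) := h2.re
  refine h3.congr_fun (fun x hx => ?_) measurableSet_Ioc
  have := beta_eqOn (a := a) (b := b) x ⟨hx.1.le, hx.2⟩
  simp [this]

lemma lintegral_beta {a b : ℝ} (ha : 0 < a) (hb : 0 < b) :
    ∫⁻ x in Ioc (0:ℝ) 1, ENNReal.ofReal (x ^ (a - 1) * (1 - x) ^ (b - 1)) =
      ENNReal.ofReal (Real.Gamma a * Real.Gamma b / Real.Gamma (a + b)) := by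
  rw [← integral_beta_real ha hb, intervalIntegral.integral_of_le zero_le_one,
    ofReal_integral_eq_lintegral_ofReal (integrableOn_beta ha hb)]
  refine (ae_restrict_iff' measurableSet_Ioc).2 (ae_of_all _ fun x hx => ?_)
  exact mul_nonneg (Real.rpow_nonneg hx.1.le _)
    (Real.rpow_nonneg (by linarith [hx.2]) _)


lemma key_binom {b t : ℝ} (hb : 0 < b) (ht0 : 0 ≤ t) (ht1 : t < 1) :
    ∑' k : ℕ, ENNReal.ofReal (Real.Gamma (b + k) * t ^ k / (Nat.factorial k)) =
      ENNReal.ofReal (Real.Gamma b * (1 - t) ^ (-b)) := by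
  have h1t : 0 < 1 - t := by linarith
  have step1 : ∀ k : ℕ,
      ENNReal.ofReal (Real.Gamma (b + k) * t ^ k / (Nat.factorial k)) =
      ∫⁻ x in Ioi (0:ℝ),
        ENNReal.ofReal (t ^ k / (Nat.factorial k) * (x ^ (b + k - 1) * Real.exp (-(1 * x)))) := by
    intro k
    have hbk : (0:ℝ) < b + k := by positivity
    have hg := lintegral_gamma_scaled (a := b + k) (r := 1) hbk one_pos
    have hc : (0:ℝ) ≤ t ^ k / (Nat.factorial k) := by positivity
    calc ENNReal.ofReal (Real.Gamma (b + k) * t ^ k / (Nat.factorial k))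
        = ENNReal.ofReal (t ^ k / (Nat.factorial k)) *
            ENNReal.ofReal ((1 / 1 : ℝ) ^ (b + k) * Real.Gamma (b + k)) := by
          rw [← ENNReal.ofReal_mul hc]
          norm_num
          ring_nf
      _ = ENNReal.ofReal (t ^ k / (Nat.factorial k)) *
            ∫⁻ x in Ioi (0:ℝ), ENNReal.ofReal (x ^ (b + k - 1) * Real.exp (-(1 * x))) := by
          rw [hg]
      _ = _ := by
          rw [← lintegral_const_mul' _ _ ENNReal.ofReal_ne_top]
          congr 1
          funext x
          rw [← ENNReal.ofReal_mul hc]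
  calc ∑' k : ℕ, ENNReal.ofReal (Real.Gamma (b + k) * t ^ k / (Nat.factorial k))
      = ∑' k : ℕ, ∫⁻ x in Ioi (0:ℝ),
          ENNReal.ofReal (t ^ k / (Nat.factorial k) * (x ^ (b + k - 1) * Real.exp (-(1 * x)))) := by
        exact tsum_congr step1
    _ = ∫⁻ x in Ioi (0:ℝ), ∑' k : ℕ,
          ENNReal.ofReal (t ^ k / (Nat.factorial k) * (x ^ (b + k - 1) * Real.exp (-(1 * x)))) := by
        refine (lintegral_tsum fun k => ?_).symm
        apply Measurable.aemeasurable
        apply Measurable.ennreal_ofReal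
        fun_prop
    _ = ∫⁻ x in Ioi (0:ℝ), ENNReal.ofReal (x ^ (b - 1) * Real.exp (-((1 - t) * x))) := by
        refine setLIntegral_congr_fun measurableSet_Ioi (fun x hx => ?_)
        have hx : (0:ℝ) < x := hx
        have hfg : ∀ k : ℕ, t ^ k / (Nat.factorial k) * (x ^ (b + k - 1) * Real.exp (-(1 * x))) =
            x ^ (b - 1) * Real.exp (-x) * ((t * x) ^ k / (Nat.factorial k)) := by
          intro k
          have : x ^ (b + k - 1) = x ^ (b - 1) * x ^ (k : ℕ) := by
            rw [← Real.rpow_natCast x k, ← Real.rpow_add hx]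
            ring_nf
          rw [this, mul_pow]
          simp only [one_mul]
          ring
        simp_rw [hfg]
        have hsum : Summable (fun k : ℕ => (t * x) ^ k / (Nat.factorial k)) :=
          Real.summable_pow_div_factorial (t * x)
        rw [← ENNReal.ofReal_tsum_of_nonneg
          (fun k => by positivity) (hsum.mul_left _)]
        congr 1
        rw [tsum_mul_left]
        have hexp : ∑' k : ℕ, (t * x) ^ k / (Nat.factorial k) = Real.exp (t * x) := by
          rw [Real.exp_eq_exp_ℝ, NormedSpace.exp_eq_tsum_div]
        rw [hexp, mul_assoc, ← Real.exp_add]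
        ring_nf
    _ = ENNReal.ofReal ((1 / (1 - t)) ^ b * Real.Gamma b) := lintegral_gamma_scaled hb h1t
    _ = ENNReal.ofReal (Real.Gamma b * (1 - t) ^ (-b)) := by
        rw [one_div, ← Real.rpow_neg_one (1 - t), ← Real.rpow_mul h1t.le]
        rw [neg_one_mul, mul_comm]


theorem stmt11 (δ β η : ℝ) (hδ : 0 < δ) (hβ : 0 < β) (h : 0 < η - δ - β) :
    ∑' k : ℕ, Real.Gamma (δ + k) * Real.Gamma (β + k) /
        (Real.Gamma (η + k) * Real.Gamma (k + 1)) =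
      Real.Gamma δ * Real.Gamma β * Real.Gamma (η - δ - β) /
        (Real.Gamma (η - δ) * Real.Gamma (η - β)) := by
  set T : ℕ → ℝ := fun k => Real.Gamma (δ + k) * Real.Gamma (β + k) /
      (Real.Gamma (η + k) * Real.Gamma (k + 1)) with hT_def
  set R : ℝ := Real.Gamma δ * Real.Gamma β * Real.Gamma (η - δ - β) /
      (Real.Gamma (η - δ) * Real.Gamma (η - β)) with hR_def
  have hη : 0 < η := by linarith
  have hηδ : 0 < η - δ := by linarith
  have hηβ : 0 < η - β := by linarith
  have hc : 0 < Real.Gamma (η - δ) := Real.Gamma_pos_of_pos hηδ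
  have hT_nonneg : ∀ k, 0 ≤ T k := by
    intro k
    have h1 : 0 < Real.Gamma (δ + k) := Real.Gamma_pos_of_pos (by positivity)
    have h2 : 0 < Real.Gamma (β + k) := Real.Gamma_pos_of_pos (by positivity)
    have h3 : 0 < Real.Gamma (η + k) := Real.Gamma_pos_of_pos (by positivity)
    have h4 : 0 < Real.Gamma ((k : ℝ) + 1) := Real.Gamma_pos_of_pos (by positivity)
    positivity
  have hR_nonneg : 0 ≤ R := by
    have h1 := Real.Gamma_pos_of_pos hδ
    have h2 := Real.Gamma_pos_of_pos hβ
    have h3 := Real.Gamma_pos_of_pos h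
    have h4 := Real.Gamma_pos_of_pos hηβ
    positivity
  -- the key ENNReal identity
  have hkey : ∑' k : ℕ, ENNReal.ofReal (T k) = ENNReal.ofReal R := by
    have step1 : ∀ k : ℕ, ENNReal.ofReal (T k) =
        ∫⁻ x in Ioc (0:ℝ) 1, ENNReal.ofReal
          (Real.Gamma (β + k) / (Nat.factorial k * Real.Gamma (η - δ)) *
            (x ^ (δ + k - 1) * (1 - x) ^ (η - δ - 1))) := by
      intro k
      have hδk : (0:ℝ) < δ + k := by positivity
      have hbeta := lintegral_beta hδk hηδ
      have hsum_eq : δ + (k:ℝ) + (η - δ) = η + k := by ring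
      rw [hsum_eq] at hbeta
      have hC : (0:ℝ) ≤ Real.Gamma (β + k) / (Nat.factorial k * Real.Gamma (η - δ)) := by
        have := Real.Gamma_pos_of_pos (show (0:ℝ) < β + k by positivity)
        positivity
      calc ENNReal.ofReal (T k)
          = ENNReal.ofReal (Real.Gamma (β + k) / (Nat.factorial k * Real.Gamma (η - δ))) *
              ENNReal.ofReal (Real.Gamma (δ + k) * Real.Gamma (η - δ) / Real.Gamma (η + k)) := by
            rw [← ENNReal.ofReal_mul hC]
            congr 1
            have hfac : Real.Gamma ((k : ℝ) + 1) = (Nat.factorial k : ℝ) := by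
              exact_mod_cast Real.Gamma_nat_eq_factorial k
            have h3 : Real.Gamma (η + k) ≠ 0 :=
              (Real.Gamma_pos_of_pos (by positivity)).ne'
            have h4 : (Nat.factorial k : ℝ) ≠ 0 := by positivity
            rw [hT_def]
            field_simp [hfac]
            ring
            rw [add_comm, hfac]
        _ = ENNReal.ofReal (Real.Gamma (β + k) / (Nat.factorial k * Real.Gamma (η - δ))) *
              ∫⁻ x in Ioc (0:ℝ) 1,
                ENNReal.ofReal (x ^ (δ + k - 1) * (1 - x) ^ (η - δ - 1)) := by rw [hbeta]
        _ = _ := by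
            rw [← lintegral_const_mul' _ _ ENNReal.ofReal_ne_top]
            congr 1
            funext x
            rw [← ENNReal.ofReal_mul hC]
    calc ∑' k : ℕ, ENNReal.ofReal (T k)
        = ∑' k : ℕ, ∫⁻ x in Ioc (0:ℝ) 1, ENNReal.ofReal
            (Real.Gamma (β + k) / (Nat.factorial k * Real.Gamma (η - δ)) *
              (x ^ (δ + k - 1) * (1 - x) ^ (η - δ - 1))) := tsum_congr step1
      _ = ∫⁻ x in Ioc (0:ℝ) 1, ∑' k : ℕ, ENNReal.ofReal
            (Real.Gamma (β + k) / (Nat.factorial k * Real.Gamma (η - δ)) *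
              (x ^ (δ + k - 1) * (1 - x) ^ (η - δ - 1))) := by
          refine (lintegral_tsum fun k => ?_).symm
          apply Measurable.aemeasurable
          apply Measurable.ennreal_ofReal
          fun_prop
      _ = ∫⁻ x in Ioo (0:ℝ) 1, ∑' k : ℕ, ENNReal.ofReal
            (Real.Gamma (β + k) / (Nat.factorial k * Real.Gamma (η - δ)) *
              (x ^ (δ + k - 1) * (1 - x) ^ (η - δ - 1))) :=
          (setLIntegral_congr Ioo_ae_eq_Ioc).symm
      _ = ∫⁻ x in Ioo (0:ℝ) 1, ENNReal.ofReal
            (Real.Gamma β / Real.Gamma (η - δ) *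
              (x ^ (δ - 1) * (1 - x) ^ (η - δ - β - 1))) := by
          refine setLIntegral_congr_fun measurableSet_Ioo (fun x hx => ?_)
          obtain ⟨hx0, hx1⟩ := hx
          have h1x : (0:ℝ) < 1 - x := by linarith
          have hfg : ∀ k : ℕ,
              Real.Gamma (β + k) / (Nat.factorial k * Real.Gamma (η - δ)) *
                (x ^ (δ + k - 1) * (1 - x) ^ (η - δ - 1)) =
              x ^ (δ - 1) * (1 - x) ^ (η - δ - 1) / Real.Gamma (η - δ) *
                (Real.Gamma (β + k) * x ^ k / (Nat.factorial k)) := by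
            intro k
            have hxk : x ^ (δ + (k:ℝ) - 1) = x ^ (δ - 1) * x ^ (k : ℕ) := by
              rw [← Real.rpow_natCast x k, ← Real.rpow_add hx0]
              ring_nf
            rw [hxk]
            have h4 : (Nat.factorial k : ℝ) ≠ 0 := by positivity
            field_simp
          simp_rw [hfg]
          have hC2 : (0:ℝ) ≤ x ^ (δ - 1) * (1 - x) ^ (η - δ - 1) / Real.Gamma (η - δ) := by
            positivity
          have key := key_binom (b := β) (t := x) hβ hx0.le hx1
          calc ∑' k : ℕ, ENNReal.ofReal
                (x ^ (δ - 1) * (1 - x) ^ (η - δ - 1) / Real.Gamma (η - δ) *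
                  (Real.Gamma (β + k) * x ^ k / (Nat.factorial k)))
              = ENNReal.ofReal (x ^ (δ - 1) * (1 - x) ^ (η - δ - 1) / Real.Gamma (η - δ)) *
                  ∑' k : ℕ, ENNReal.ofReal (Real.Gamma (β + k) * x ^ k / (Nat.factorial k)) := by
                rw [← ENNReal.tsum_mul_left]
                exact tsum_congr fun k => by rw [← ENNReal.ofReal_mul hC2]
            _ = ENNReal.ofReal (x ^ (δ - 1) * (1 - x) ^ (η - δ - 1) / Real.Gamma (η - δ)) *
                  ENNReal.ofReal (Real.Gamma β * (1 - x) ^ (-β)) := by rw [key]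
            _ = _ := by
                rw [← ENNReal.ofReal_mul hC2]
                congr 1
                have hpow : (1 - x) ^ (η - δ - 1) * (1 - x) ^ (-β) =
                    (1 - x) ^ (η - δ - β - 1) := by
                  rw [← Real.rpow_add h1x]
                  ring_nf
                field_simp
                rw [← hpow]
      _ = ∫⁻ x in Ioc (0:ℝ) 1, ENNReal.ofReal
            (Real.Gamma β / Real.Gamma (η - δ) *
              (x ^ (δ - 1) * (1 - x) ^ (η - δ - β - 1))) :=
          setLIntegral_congr Ioo_ae_eq_Ioc
      _ = ENNReal.ofReal (Real.Gamma β / Real.Gamma (η - δ)) *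
            ∫⁻ x in Ioc (0:ℝ) 1,
              ENNReal.ofReal (x ^ (δ - 1) * (1 - x) ^ (η - δ - β - 1)) := by
          rw [← lintegral_const_mul' _ _ ENNReal.ofReal_ne_top]
          congr 1
          funext x
          rw [← ENNReal.ofReal_mul (by positivity)]
      _ = ENNReal.ofReal (Real.Gamma β / Real.Gamma (η - δ)) *
            ENNReal.ofReal (Real.Gamma δ * Real.Gamma (η - δ - β) / Real.Gamma (η - β)) := by
          have hbeta2 := lintegral_beta hδ h
          have : δ + (η - δ - β) = η - β := by ring
          rw [this] at hbeta2
          rw [hbeta2]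
      _ = ENNReal.ofReal R := by
          rw [← ENNReal.ofReal_mul (by positivity)]
          congr 1
          rw [hR_def]
          field_simp
  -- deduce the real statement
  have hsummable : Summable T := by
    have hne : ∑' k : ℕ, ENNReal.ofReal (T k) ≠ ⊤ := by
      rw [hkey]; exact ENNReal.ofReal_ne_top
    have := ENNReal.summable_toReal hne
    refine this.congr fun k => ?_
    rw [ENNReal.toReal_ofReal (hT_nonneg k)]
  have : ENNReal.ofReal (∑' k, T k) = ENNReal.ofReal R := by
    rw [ENNReal.ofReal_tsum_of_nonneg hT_nonneg hsummable, hkey]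
  have := (ENNReal.ofReal_eq_ofReal_iff (tsum_nonneg hT_nonneg) hR_nonneg).1 this
  exact this
end
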